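/- Fix λ₀ ∈ ℂ∖{0,1,−1,i,−i}, set t₀ = λ₀ + λ₀⁻¹ (so t₀ ∉ {0,2,−2}), and let D_{λ₀} = [[λ₀,0],[0,λ₀⁻¹]]. Then every A ∈ SL₂(ℂ) with tr A = t₀ and tr(A·D_{λ₀}) = −2 satisfies A₁₂·A₂₁ = −4t₀²/(t₀²−4) ≠ 0, and the map A ↦ A₂₁ is a bijection from {A ∈ SL₂(ℂ) : tr A = t₀, tr(A·D_{λ₀}) = −2} onto ℂ∖{0}. -/

import Mathlib

open Matrix

theorem stmt8 (lam0 : ℂ) (h0 : lam0 ≠ 0) (h1 : lam0 ≠ 1) (hm1 : lam0 ≠ -1)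
    (hI : lam0 ≠ Complex.I) (hmI : lam0 ≠ -Complex.I)
    (t0 : ℂ) (ht0 : t0 = lam0 + lam0⁻¹) :
    (∀ A : Matrix (Fin 2) (Fin 2) ℂ,
      A.det = 1 → A.trace = t0 → (A * !![lam0, 0; 0, lam0⁻¹]).trace = -2 →
      A 0 1 * A 1 0 = -4 * t0 ^ 2 / (t0 ^ 2 - 4)) ∧
    (-4 * t0 ^ 2 / (t0 ^ 2 - 4) ≠ 0) ∧
    Set.BijOn (fun A : Matrix (Fin 2) (Fin 2) ℂ => A 1 0)
      {A : Matrix (Fin 2) (Fin 2) ℂ | A.det = 1 ∧ A.trace = t0 ∧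
        (A * !![lam0, 0; 0, lam0⁻¹]).trace = -2}
      {z : ℂ | z ≠ 0} := by
  subst ht0
  have h1' : lam0 - 1 ≠ 0 := sub_ne_zero.mpr h1
  have hm1' : lam0 + 1 ≠ 0 := fun h => hm1 (by linear_combination h)
  have hI' : lam0 - Complex.I ≠ 0 := sub_ne_zero.mpr hI
  have hmI' : lam0 + Complex.I ≠ 0 := fun h => hmI (by linear_combination h)
  have hsq1 : lam0 ^ 2 - 1 ≠ 0 := by
    intro h; exact mul_ne_zero h1' hm1' (by linear_combination h)
  have hsqp1 : lam0 ^ 2 + 1 ≠ 0 := by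
    intro h
    exact mul_ne_zero hI' hmI' (by linear_combination h - Complex.I_sq)
  have hden : (lam0 + lam0⁻¹) ^ 2 - 4 = (lam0 ^ 2 - 1) ^ 2 / lam0 ^ 2 := by
    field_simp; ring
  have hnum : -4 * (lam0 + lam0⁻¹) ^ 2 = -4 * (lam0 ^ 2 + 1) ^ 2 / lam0 ^ 2 := by
    field_simp
  have htr2 : ∀ A : Matrix (Fin 2) (Fin 2) ℂ,
      (A * !![lam0, 0; 0, lam0⁻¹]).trace = A 0 0 * lam0 + A 1 1 * lam0⁻¹ := by
    intro A
    simp [Matrix.trace_fin_two, Matrix.mul_apply, Fin.sum_univ_two]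
  have key : ∀ A : Matrix (Fin 2) (Fin 2) ℂ,
      A.det = 1 → A.trace = lam0 + lam0⁻¹ → (A * !![lam0, 0; 0, lam0⁻¹]).trace = -2 →
      A 0 0 = -(3 * lam0 ^ 2 + 1) / (lam0 * (lam0 ^ 2 - 1)) ∧
      A 1 1 = lam0 * (lam0 ^ 2 + 3) / (lam0 ^ 2 - 1) ∧
      A 0 1 * A 1 0 = -4 * (lam0 + lam0⁻¹) ^ 2 / ((lam0 + lam0⁻¹) ^ 2 - 4) := by
    intro A hdet htr htrD
    rw [Matrix.trace_fin_two] at htr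
    rw [htr2 A] at htrD
    rw [Matrix.det_fin_two] at hdet
    have hA00 : A 0 0 = -(3 * lam0 ^ 2 + 1) / (lam0 * (lam0 ^ 2 - 1)) := by
      field_simp at htr htrD ⊢
      linear_combination lam0 * htrD - htr
    have hA11 : A 1 1 = lam0 * (lam0 ^ 2 + 3) / (lam0 ^ 2 - 1) := by
      rw [hA00] at htr
      field_simp at htr ⊢
      have h2 : lam0 ^ 2 * (A 1 1 * (lam0 ^ 2 - 1)) = lam0 ^ 2 * (lam0 * (lam0 ^ 2 + 3)) := by
        linear_combination lam0 * htr
      exact mul_left_cancel₀ (pow_ne_zero 2 h0) (by linear_combination h2)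
    refine ⟨hA00, hA11, ?_⟩
    rw [hA00, hA11] at hdet
    rw [hden, hnum]
    field_simp at hdet ⊢
    linear_combination -hdet
  have hKne : -4 * (lam0 + lam0⁻¹) ^ 2 / ((lam0 + lam0⁻¹) ^ 2 - 4) ≠ 0 := by
    rw [hden, hnum]
    exact div_ne_zero
      (div_ne_zero (mul_ne_zero (by norm_num) (pow_ne_zero 2 hsqp1)) (pow_ne_zero 2 h0))
      (div_ne_zero (pow_ne_zero 2 hsq1) (pow_ne_zero 2 h0))
  refine ⟨fun A hdet htr htrD => (key A hdet htr htrD).2.2, hKne, ?_, ?_, ?_⟩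
  · -- MapsTo
    intro A hA
    obtain ⟨hdet, htr, htrD⟩ := hA
    have hk := (key A hdet htr htrD).2.2
    exact right_ne_zero_of_mul (hk ▸ hKne)
  · -- InjOn
    intro A hA B hB h
    obtain ⟨hdetA, htrA, htrDA⟩ := hA
    obtain ⟨hdetB, htrB, htrDB⟩ := hB
    obtain ⟨hA00, hA11, hAk⟩ := key A hdetA htrA htrDA
    obtain ⟨hB00, hB11, hBk⟩ := key B hdetB htrB htrDB
    simp only at h
    have hB10 : B 1 0 ≠ 0 := right_ne_zero_of_mul (hBk ▸ hKne)
    have h01 : A 0 1 = B 0 1 := by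
      have hh := hAk.trans hBk.symm
      rw [h] at hh
      exact mul_right_cancel₀ hB10 hh
    rw [Matrix.eta_fin_two A, Matrix.eta_fin_two B, hA00, hA11, hB00, hB11, h01, h]
  · -- SurjOn
    intro z hz
    simp only [Set.mem_setOf_eq] at hz
    refine ⟨!![-(3 * lam0 ^ 2 + 1) / (lam0 * (lam0 ^ 2 - 1)),
        -4 * (lam0 ^ 2 + 1) ^ 2 / ((lam0 ^ 2 - 1) ^ 2 * z);
        z, lam0 * (lam0 ^ 2 + 3) / (lam0 ^ 2 - 1)], ⟨?_, ?_, ?_⟩, by simp⟩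
    · rw [Matrix.det_fin_two_of]
      field_simp
      ring
    · rw [Matrix.trace_fin_two_of]
      field_simp
      ring
    · rw [htr2]
      simp only [Matrix.cons_val', Matrix.cons_val_zero, Matrix.cons_val_one, Matrix.head_cons,
        Matrix.head_fin_const, Matrix.empty_val', Matrix.cons_val_fin_one, Matrix.of_apply]
      field_simp
      ring
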